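/- Fix integers n ≥ 1 and 0 < v_1 < v_2 < ⋯ < v_n < v_{n+1} = N. Let d be a degree vector that is aligned and not identically zero. Then for every 1 ≤ i ≤ n, every integer 0 ≤ ℓ ≤ v_{i+1} − v_i, and every 1 ≤ j ≤ v_i, D(d) < − F_ℓ(d^{i+1}) + (v_i − v_{i+1} + ℓ) · d^i_j, where F_ℓ(d^{i+1}) denotes the maximum of Σ_{k∈S} d^{i+1}_k over all subsets S ⊆ {1, …, v_{i+1}} of cardinality ℓ. -/

import Mathlib

open Finset

/-- `Bb m = m(m+1)/2` for `m ≥ 0` and `Bb m = 0` for `m < 0`. -/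
def Bb (m : ℤ) : ℤ := if 0 ≤ m then m * (m + 1) / 2 else 0

/-- The degree `D(d)` of the coefficient `J_d` of the twisted small `J`-function of
the abelianization of `Fl(v_1,…,v_n; N)`. -/
def degD (n : ℕ) (v : ℕ → ℕ) (d : ℕ → ℕ → ℕ) : ℤ :=
  ∑ i ∈ Icc 1 n,
    ((∑ j ∈ Icc 1 (v i), ∑ k ∈ Icc 1 (v i), Bb ((d i j : ℤ) - (d i k : ℤ)))
      - ∑ j ∈ Icc 1 (v i), ∑ r ∈ Icc 1 (v (i + 1)),
          Bb ((d i j : ℤ) - (d (i + 1) r : ℤ)))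

/-- A degree vector `d` is aligned if for every `1 ≤ i ≤ n` there is an injection
`f_i : {1,…,v_i} → {1,…,v_{i+1}}` with `d^i_j ≥ d^{i+1}_{f_i(j)}` for all `j`. -/
def Aligned (n : ℕ) (v : ℕ → ℕ) (d : ℕ → ℕ → ℕ) : Prop :=
  ∀ i, 1 ≤ i → i ≤ n → ∃ f : ℕ → ℕ,
    Set.InjOn f (Set.Icc 1 (v i)) ∧
    ∀ j, 1 ≤ j → j ≤ v i → 1 ≤ f j ∧ f j ≤ v (i + 1) ∧ d (i + 1) (f j) ≤ d i j

lemma Bb_nonneg (m : ℤ) : 0 ≤ Bb m := by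
  unfold Bb; split
  · exact Int.ediv_nonneg (by nlinarith) (by norm_num)
  · exact le_refl 0

lemma le_Bb (m : ℤ) : m ≤ Bb m := by
  unfold Bb; split
  · rw [Int.le_ediv_iff_mul_le (by norm_num)]
    rename_i h
    rcases (by omega : m = 0 ∨ 1 ≤ m) with h'|h' <;> nlinarith
  · omega

lemma Bb_mono {a b : ℤ} (h : a ≤ b) : Bb a ≤ Bb b := by
  unfold Bb; split_ifs with h1 h2 h2
  · exact Int.ediv_le_ediv (by norm_num) (by nlinarith)
  · omega
  · exact Int.ediv_nonneg (by nlinarith) (by norm_num)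
  · exact le_refl 0

lemma Bb_zero : Bb 0 = 0 := by norm_num [Bb]

lemma one_le_Bb {m : ℤ} (h : 1 ≤ m) : 1 ≤ Bb m := le_trans h (le_Bb m)

set_option maxHeartbeats 1600000 in
/-- Second degree-bound lemma: for an aligned, not identically zero degree vector `d`,
for every `1 ≤ i ≤ n`, `0 ≤ ℓ ≤ v_{i+1} − v_i`, and `1 ≤ j ≤ v_i`,
`D(d) < − F_ℓ(d^{i+1}) + (v_i − v_{i+1} + ℓ) · d^i_j`, where `F_ℓ(d^{i+1})` is the
maximum of `Σ_{k∈S} d^{i+1}_k` over subsets `S ⊆ {1,…,v_{i+1}}` of cardinality `ℓ`. -/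
theorem degD_lt_F_bound (n : ℕ) (hn : 1 ≤ n) (v : ℕ → ℕ) (d : ℕ → ℕ → ℕ)
    (hv1 : 0 < v 1) (hvmono : ∀ i, 1 ≤ i → i ≤ n → v i < v (i + 1))
    (hdtop : ∀ r, d (n + 1) r = 0)
    (halign : Aligned n v d)
    (hne : ∃ i j, 1 ≤ i ∧ i ≤ n ∧ 1 ≤ j ∧ j ≤ v i ∧ d i j ≠ 0) :
    ∀ i, 1 ≤ i → i ≤ n → ∀ ℓ : ℕ, ℓ ≤ v (i + 1) - v i → ∀ j, 1 ≤ j → j ≤ v i →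
      ∀ F : ℤ,
        IsGreatest {x : ℤ | ∃ S : Finset ℕ, S ⊆ Icc 1 (v (i + 1)) ∧ S.card = ℓ ∧
          x = ∑ k ∈ S, (d (i + 1) k : ℤ)} F →
        degD n v d < -F + ((v i : ℤ) - (v (i + 1) : ℤ) + (ℓ : ℤ)) * (d i j : ℤ) := by
  classical
  -- choose the alignment injections
  have halign' : ∀ i : ℕ, ∃ g : ℕ → ℕ, 1 ≤ i → i ≤ n →
      Set.InjOn g (Set.Icc 1 (v i)) ∧
      ∀ j, 1 ≤ j → j ≤ v i → 1 ≤ g j ∧ g j ≤ v (i + 1) ∧ d (i + 1) (g j) ≤ d i j := by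
    intro i
    by_cases h : 1 ≤ i ∧ i ≤ n
    · obtain ⟨g, hg⟩ := halign i h.1 h.2
      exact ⟨g, fun _ _ => hg⟩
    · exact ⟨id, fun h1 h2 => absurd ⟨h1, h2⟩ h⟩
  choose f hf using halign'
  set E : ℕ → ℤ := fun q => ∑ a ∈ Icc 1 (v q), ∑ b ∈ Icc 1 (v q),
    (Bb ((d q a : ℤ) - (d (q + 1) (f q b) : ℤ)) - Bb ((d q a : ℤ) - (d q b : ℤ))) with hE
  set T : ℕ → ℤ := fun q => ∑ a ∈ Icc 1 (v q),
    ∑ r ∈ Icc 1 (v (q + 1)) \ (Icc 1 (v q)).image (f q),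
      Bb ((d q a : ℤ) - (d (q + 1) r : ℤ)) with hT
  -- E-terms are nonneg
  have hEterm : ∀ q, 1 ≤ q → q ≤ n → ∀ a, ∀ b ∈ Icc 1 (v q),
      0 ≤ Bb ((d q a : ℤ) - (d (q + 1) (f q b) : ℤ)) - Bb ((d q a : ℤ) - (d q b : ℤ)) := by
    intro q h1 h2 a b hb
    rw [mem_Icc] at hb
    have := ((hf q h1 h2).2 b hb.1 hb.2).2.2
    have : ((d (q + 1) (f q b) : ℤ)) ≤ (d q b : ℤ) := by exact_mod_cast this
    have := Bb_mono (by linarith : (d q a : ℤ) - (d q b : ℤ) ≤ (d q a : ℤ) - (d (q + 1) (f q b) : ℤ))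
    linarith
  have hE_nonneg : ∀ q, 1 ≤ q → q ≤ n → 0 ≤ E q := by
    intro q h1 h2
    refine Finset.sum_nonneg fun a _ => Finset.sum_nonneg fun b hb => hEterm q h1 h2 a b hb
  have hT_nonneg : ∀ q, 0 ≤ T q := by
    intro q
    exact Finset.sum_nonneg fun a _ => Finset.sum_nonneg fun r _ => Bb_nonneg _
  -- image facts
  have himg : ∀ q, 1 ≤ q → q ≤ n → (Icc 1 (v q)).image (f q) ⊆ Icc 1 (v (q + 1)) := by
    intro q h1 h2 x hx
    rw [mem_image] at hx
    obtain ⟨b, hb, rfl⟩ := hx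
    rw [mem_Icc] at hb ⊢
    exact ⟨((hf q h1 h2).2 b hb.1 hb.2).1, ((hf q h1 h2).2 b hb.1 hb.2).2.1⟩
  have hinj : ∀ q, 1 ≤ q → q ≤ n → ∀ x ∈ Icc 1 (v q), ∀ y ∈ Icc 1 (v q),
      f q x = f q y → x = y := by
    intro q h1 h2 x hx y hy hxy
    rw [mem_Icc] at hx hy
    exact (hf q h1 h2).1 (Set.mem_Icc.2 hx) (Set.mem_Icc.2 hy) hxy
  -- decomposition
  have hdecomp : degD n v d = -∑ q ∈ Icc 1 n, (E q + T q) := by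
    rw [degD, ← Finset.sum_neg_distrib]
    refine Finset.sum_congr rfl fun q hq => ?_
    rw [mem_Icc] at hq
    have hsplit : ∀ a, ∑ r ∈ Icc 1 (v (q + 1)), Bb ((d q a : ℤ) - (d (q + 1) r : ℤ))
        = ∑ b ∈ Icc 1 (v q), Bb ((d q a : ℤ) - (d (q + 1) (f q b) : ℤ))
          + ∑ r ∈ Icc 1 (v (q + 1)) \ (Icc 1 (v q)).image (f q),
              Bb ((d q a : ℤ) - (d (q + 1) r : ℤ)) := by
      intro a
      rw [← Finset.sum_sdiff (himg q hq.1 hq.2), Finset.sum_image (hinj q hq.1 hq.2)]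
      ring
    simp only [hE, hT]
    rw [Finset.sum_congr rfl fun a _ => hsplit a]
    rw [Finset.sum_add_distrib]
    simp only [Finset.sum_sub_distrib]
    ring
  -- diagonal bound
  have hdiag : ∀ p, 1 ≤ p → p ≤ n → ∀ S : Finset ℕ, S ⊆ Icc 1 (v p) →
      ∑ k ∈ S, ((d p k : ℤ) - (d (p + 1) (f p k) : ℤ)) ≤ E p := by
    intro p h1 h2 S hS
    have step1 : ∑ k ∈ S, ((d p k : ℤ) - (d (p + 1) (f p k) : ℤ))
        ≤ ∑ k ∈ S, (Bb ((d p k : ℤ) - (d (p + 1) (f p k) : ℤ)) - Bb ((d p k : ℤ) - (d p k : ℤ))) := by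
      refine Finset.sum_le_sum fun k hk => ?_
      rw [sub_self, Bb_zero]
      simpa using le_Bb ((d p k : ℤ) - (d (p + 1) (f p k) : ℤ))
    refine le_trans step1 ?_
    have step2 : ∀ k ∈ S,
        (Bb ((d p k : ℤ) - (d (p + 1) (f p k) : ℤ)) - Bb ((d p k : ℤ) - (d p k : ℤ)))
        ≤ ∑ b ∈ Icc 1 (v p), (Bb ((d p k : ℤ) - (d (p + 1) (f p b) : ℤ)) - Bb ((d p k : ℤ) - (d p b : ℤ))) := by
      intro k hk
      exact Finset.single_le_sum (fun b hb => hEterm p h1 h2 k b hb) (hS hk)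
    refine le_trans (Finset.sum_le_sum step2) ?_
    refine Finset.sum_le_sum_of_subset_of_nonneg hS fun a _ _ => ?_
    exact Finset.sum_nonneg fun b hb => hEterm p h1 h2 a b hb
  -- chain lemma
  have chain : ∀ m p, n + 1 ≤ p + m → 1 ≤ p → p ≤ n + 1 →
      ∀ S : Finset ℕ, S ⊆ Icc 1 (v p) → ∑ k ∈ S, (d p k : ℤ) ≤ ∑ q ∈ Icc p n, E q := by
    intro m
    induction m with
    | zero =>
      intro p h1 h2 h3 S hS
      have hp : p = n + 1 := by omega
      subst hp
      have : ∑ k ∈ S, ((d (n + 1) k : ℤ)) = 0 :=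
        Finset.sum_eq_zero fun k _ => by simp [hdtop]
      rw [this, Finset.Icc_eq_empty (by omega)]
      simp
    | succ m ih =>
      intro p h1 h2 h3 S hS
      by_cases hp : p = n + 1
      · subst hp
        have : ∑ k ∈ S, ((d (n + 1) k : ℤ)) = 0 :=
          Finset.sum_eq_zero fun k _ => by simp [hdtop]
        rw [this, Finset.Icc_eq_empty (by omega)]
        simp
      · have hpn : p ≤ n := by omega
        have hsum : ∑ k ∈ S, (d p k : ℤ)
            = ∑ k ∈ S, ((d p k : ℤ) - (d (p + 1) (f p k) : ℤ))
              + ∑ k ∈ S, (d (p + 1) (f p k) : ℤ) := by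
          rw [← Finset.sum_add_distrib]; simp
        rw [hsum]
        have himgS : S.image (f p) ⊆ Icc 1 (v (p + 1)) :=
          le_trans (Finset.image_subset_image hS) (himg p h2 hpn)
        have hrw : ∑ x ∈ S.image (f p), (d (p + 1) x : ℤ) = ∑ k ∈ S, (d (p + 1) (f p k) : ℤ) :=
          Finset.sum_image fun x hx y hy h => hinj p h2 hpn x (hS hx) y (hS hy) h
        have h2' := ih (p + 1) (by omega) (by omega) (by omega) (S.image (f p)) himgS
        have hsplitIcc : Icc p n = insert p (Icc (p + 1) n) := by
          ext x; simp only [mem_Icc, mem_insert]; omega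
        rw [hsplitIcc, Finset.sum_insert (by simp [mem_Icc])]
        have := hdiag p h2 hpn S hS
        rw [← hrw]
        linarith
  -- locate the top nonzero level
  set P : ℕ → Prop := fun q => ∃ r, 1 ≤ r ∧ r ≤ v q ∧ d q r ≠ 0 with hP
  obtain ⟨i1, j1, hi11, hi1n, hj11, hj1v, hd1⟩ := hne
  set istar := Nat.findGreatest P n with histar
  have hPistar : P istar := Nat.findGreatest_spec hi1n ⟨j1, hj11, hj1v, hd1⟩
  have histar1 : 1 ≤ istar := le_trans hi11 (Nat.le_findGreatest hi1n ⟨j1, hj11, hj1v, hd1⟩)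
  have histarn : istar ≤ n := Nat.findGreatest_le n
  obtain ⟨jstar, hjstar1, hjstarv, hjstarne⟩ := hPistar
  have hzero : ∀ q r, istar < q → q ≤ n + 1 → 1 ≤ r → r ≤ v q → d q r = 0 := by
    intro q r hq1 hq2 hr1 hr2
    rcases eq_or_lt_of_le hq2 with h | h
    · rw [h]; exact hdtop r
    · by_contra hc
      exact Nat.findGreatest_is_greatest hq1 (by omega) ⟨r, hr1, hr2, hc⟩
  -- main part
  intro i hi1 hin ℓ hℓ j hj1 hjv F hF
  obtain ⟨S₀, hS₀sub, hS₀card, hFeq⟩ := hF.1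
  set U := Icc 1 (v (i + 1)) \ (Icc 1 (v i)).image (f i) with hU
  have hvlt : v i < v (i + 1) := hvmono i hi1 hin
  have hUcard : U.card = v (i + 1) - v i := by
    rw [hU, Finset.card_sdiff_of_subset (himg i hi1 hin),
      Finset.card_image_of_injOn (by rw [Finset.coe_Icc]; exact (hf i hi1 hin).1),
      Nat.card_Icc, Nat.card_Icc]
    omega
  have hUS : (v (i + 1) - v i) - ℓ ≤ (U \ S₀).card := by
    have := Finset.le_card_sdiff S₀ U
    have h2 : U.card - S₀.card ≤ (U \ S₀).card := Finset.le_card_sdiff S₀ U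
    omega
  obtain ⟨U', hU'sub, hU'card⟩ := Finset.exists_subset_card_eq hUS
  have hU'U : U' ⊆ U := le_trans hU'sub (Finset.sdiff_subset)
  have hU'Icc : U' ⊆ Icc 1 (v (i + 1)) := le_trans hU'U (Finset.sdiff_subset)
  have hdisj : Disjoint S₀ U' := by
    rw [Finset.disjoint_right]
    intro x hx
    have := hU'sub hx
    rw [Finset.mem_sdiff] at this
    exact this.2
  -- T i lower bound
  have hTi : ((v (i + 1) - v i - ℓ : ℕ) : ℤ) * (d i j : ℤ) - (∑ r ∈ U', (d (i + 1) r : ℤ)) ≤ T i := by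
    have s1 : ∑ r ∈ U', ((d i j : ℤ) - (d (i + 1) r : ℤ)) ≤ ∑ r ∈ U', Bb ((d i j : ℤ) - (d (i + 1) r : ℤ)) :=
      Finset.sum_le_sum fun r _ => le_Bb _
    have s2 : ∑ r ∈ U', Bb ((d i j : ℤ) - (d (i + 1) r : ℤ))
        ≤ ∑ r ∈ U, Bb ((d i j : ℤ) - (d (i + 1) r : ℤ)) :=
      Finset.sum_le_sum_of_subset_of_nonneg hU'U fun r _ _ => Bb_nonneg _
    have s3 : ∑ r ∈ U, Bb ((d i j : ℤ) - (d (i + 1) r : ℤ)) ≤ T i := by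
      refine Finset.single_le_sum (f := fun a => ∑ r ∈ U, Bb ((d i a : ℤ) - (d (i + 1) r : ℤ)))
        (fun a _ => Finset.sum_nonneg fun r _ => Bb_nonneg _) (by rw [mem_Icc]; exact ⟨hj1, hjv⟩)
    have s4 : ∑ r ∈ U', ((d i j : ℤ) - (d (i + 1) r : ℤ))
        = ((v (i + 1) - v i - ℓ : ℕ) : ℤ) * (d i j : ℤ) - ∑ r ∈ U', (d (i + 1) r : ℤ) := by
      rw [Finset.sum_sub_distrib, Finset.sum_const, hU'card, nsmul_eq_mul]
    linarith
  -- chain bound for S₀ ∪ U'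
  have hchain2 : F + ∑ r ∈ U', (d (i + 1) r : ℤ) ≤ ∑ q ∈ Icc (i + 1) n, E q := by
    have hsub : S₀ ∪ U' ⊆ Icc 1 (v (i + 1)) := Finset.union_subset hS₀sub hU'Icc
    have := chain (n + 1) (i + 1) (by omega) (by omega) (by omega) (S₀ ∪ U') hsub
    rw [Finset.sum_union hdisj] at this
    rw [hFeq]
    exact this
  -- total sum split
  have hsplitTot : ∑ q ∈ Icc 1 n, (E q + T q) = (∑ q ∈ Icc 1 n, E q) + ∑ q ∈ Icc 1 n, T q :=
    Finset.sum_add_distrib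
  have hTmain : T i ≤ ∑ q ∈ Icc 1 n, T q := by
    refine Finset.single_le_sum (fun q _ => hT_nonneg q) (by rw [mem_Icc]; exact ⟨hi1, hin⟩)
  -- key lower bound on total
  have hTot : 1 + F + ((v (i + 1) - v i - ℓ : ℕ) : ℤ) * (d i j : ℤ) ≤ ∑ q ∈ Icc 1 n, (E q + T q) := by
    by_cases hcase : istar = i
    · -- extra from E i
      have hfz : d (i + 1) (f i jstar) = 0 := by
        refine hzero (i + 1) (f i jstar) (by omega) (by omega)
          ((hf i hi1 hin).2 jstar hjstar1 (hcase ▸ hjstarv)).1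
          ((hf i hi1 hin).2 jstar hjstar1 (hcase ▸ hjstarv)).2.1
      have hEi : 1 ≤ E i := by
        have hjs : jstar ∈ Icc 1 (v i) := by rw [mem_Icc]; exact ⟨hjstar1, hcase ▸ hjstarv⟩
        have t1 : (1 : ℤ) ≤ Bb ((d i jstar : ℤ) - (d (i + 1) (f i jstar) : ℤ)) - Bb ((d i jstar : ℤ) - (d i jstar : ℤ)) := by
          rw [sub_self, Bb_zero, hfz, sub_zero, Nat.cast_zero, sub_zero]
          have : (1 : ℤ) ≤ (d i jstar : ℤ) := by
            have : d i jstar ≠ 0 := hcase ▸ hjstarne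
            omega
          linarith [one_le_Bb this]
        have t2 : Bb ((d i jstar : ℤ) - (d (i + 1) (f i jstar) : ℤ)) - Bb ((d i jstar : ℤ) - (d i jstar : ℤ))
            ≤ ∑ b ∈ Icc 1 (v i), (Bb ((d i jstar : ℤ) - (d (i + 1) (f i b) : ℤ)) - Bb ((d i jstar : ℤ) - (d i b : ℤ))) :=
          Finset.single_le_sum (fun b hb => hEterm i hi1 hin jstar b hb) hjs
        have t3 : ∑ b ∈ Icc 1 (v i), (Bb ((d i jstar : ℤ) - (d (i + 1) (f i b) : ℤ)) - Bb ((d i jstar : ℤ) - (d i b : ℤ)))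
            ≤ E i :=
          Finset.single_le_sum (f := fun a => ∑ b ∈ Icc 1 (v i), (Bb ((d i a : ℤ) - (d (i + 1) (f i b) : ℤ)) - Bb ((d i a : ℤ) - (d i b : ℤ))))
            (fun a _ => Finset.sum_nonneg fun b hb => hEterm i hi1 hin a b hb) hjs
        linarith
      have hEsplit : E i + ∑ q ∈ Icc (i + 1) n, E q ≤ ∑ q ∈ Icc 1 n, E q := by
        have hsp : Icc 1 n = Icc 1 i ∪ Icc (i + 1) n := by
          ext x; simp only [mem_Icc, mem_union]; omega
        have hdj : Disjoint (Icc 1 i) (Icc (i + 1) n) := by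
          rw [Finset.disjoint_left]
          intro x hx hx2
          rw [mem_Icc] at hx hx2
          omega
        rw [hsp, Finset.sum_union hdj]
        have : E i ≤ ∑ q ∈ Icc 1 i, E q :=
          Finset.single_le_sum (fun q hq => hE_nonneg q (by rw [mem_Icc] at hq; exact hq.1) (by rw [mem_Icc] at hq; omega)) (by rw [mem_Icc]; omega)
        linarith
      rw [hsplitTot]
      have : (1:ℤ) + (F + ∑ r ∈ U', (d (i + 1) r : ℤ)) + (((v (i + 1) - v i - ℓ : ℕ) : ℤ) * (d i j : ℤ) - ∑ r ∈ U', (d (i + 1) r : ℤ))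
          ≤ (E i + ∑ q ∈ Icc (i + 1) n, E q) + T i := by
        linarith
      linarith
    · -- extra from T istar
      have hUstar : (Icc 1 (v (istar + 1)) \ (Icc 1 (v istar)).image (f istar)).Nonempty := by
        rw [← Finset.card_pos]
        have hle : ((Icc 1 (v istar)).image (f istar)).card ≤ v istar := by
          refine le_trans (Finset.card_image_le) ?_
          rw [Nat.card_Icc]; omega
        have hsub2 : (Icc 1 (v istar)).image (f istar) ⊆ Icc 1 (v (istar + 1)) := himg istar histar1 histarn
        have := Finset.card_sdiff_of_subset hsub2
        rw [this, Nat.card_Icc]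
        have := hvmono istar histar1 histarn
        omega
      obtain ⟨r0, hr0⟩ := hUstar
      have hr0Icc : r0 ∈ Icc 1 (v (istar + 1)) := (Finset.mem_sdiff.1 hr0).1
      have hr0z : d (istar + 1) r0 = 0 := by
        rw [mem_Icc] at hr0Icc
        exact hzero (istar + 1) r0 (by omega) (by omega) hr0Icc.1 hr0Icc.2
      have hTstar : 1 ≤ T istar := by
        have t1 : (1 : ℤ) ≤ Bb ((d istar jstar : ℤ) - (d (istar + 1) r0 : ℤ)) := by
          rw [hr0z, Nat.cast_zero, sub_zero]
          refine one_le_Bb ?_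
          have : d istar jstar ≠ 0 := hjstarne
          omega
        have t2 : Bb ((d istar jstar : ℤ) - (d (istar + 1) r0 : ℤ))
            ≤ ∑ r ∈ Icc 1 (v (istar + 1)) \ (Icc 1 (v istar)).image (f istar),
                Bb ((d istar jstar : ℤ) - (d (istar + 1) r : ℤ)) :=
          Finset.single_le_sum (fun r _ => Bb_nonneg _) hr0
        have t3 : ∑ r ∈ Icc 1 (v (istar + 1)) \ (Icc 1 (v istar)).image (f istar),
                Bb ((d istar jstar : ℤ) - (d (istar + 1) r : ℤ)) ≤ T istar := by
          refine Finset.single_le_sum (f := fun a => ∑ r ∈ Icc 1 (v (istar + 1)) \ (Icc 1 (v istar)).image (f istar), Bb ((d istar a : ℤ) - (d (istar + 1) r : ℤ)))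
            (fun a _ => Finset.sum_nonneg fun r _ => Bb_nonneg _) (by rw [mem_Icc]; exact ⟨hjstar1, hjstarv⟩)
        linarith
      have hTpair : T i + T istar ≤ ∑ q ∈ Icc 1 n, T q := by
        have hsub3 : ({i, istar} : Finset ℕ) ⊆ Icc 1 n := by
          intro x hx
          rw [mem_insert, mem_singleton] at hx
          rw [mem_Icc]
          rcases hx with rfl | rfl
          · exact ⟨hi1, hin⟩
          · exact ⟨histar1, histarn⟩
        have := Finset.sum_le_sum_of_subset_of_nonneg hsub3 (fun q _ _ => hT_nonneg q)
        rwa [Finset.sum_pair (fun h => hcase h.symm)] at this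
      have hEsub : ∑ q ∈ Icc (i + 1) n, E q ≤ ∑ q ∈ Icc 1 n, E q := by
        refine Finset.sum_le_sum_of_subset_of_nonneg (Finset.Icc_subset_Icc (by omega) le_rfl)
          fun q hq _ => hE_nonneg q (by rw [mem_Icc] at hq; exact hq.1) (by rw [mem_Icc] at hq; exact hq.2)
      rw [hsplitTot]
      linarith
  -- conclusion
  have hcast : ((v (i + 1) - v i - ℓ : ℕ) : ℤ) = (v (i + 1) : ℤ) - (v i : ℤ) - (ℓ : ℤ) := by
    omega
  rw [hdecomp]
  rw [hcast] at hTot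
  nlinarith [hTot]
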